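/- Error propagation in backward value approximation: suppose V_t satisfies the recursion V_t = q_t ρ^B_t(c^B_t) + p_t ρ^A_t(c^A_t + e^{−r} V_{t+1}) with ρ^A_t, ρ^B_t Lipschitz with constant 1 in the sup norm, and suppose approximations V̂_t satisfy ‖V̂_T − V_T‖_∞ < ε_T and, for each t < T, ‖V̂_t − (q_t ρ^B_t(c^B_t) + p_t ρ^A_t(c^A_t + e^{−r} V̂_{t+1}))‖_∞ < ε_t. Then ‖V̂_t − V_t‖_∞ < ε_t + p_t e^{−r} (error at t+1), and by induction ‖V̂_t − V_t‖_∞ < Σ_{k=t}^{T} (∏_{j=t}^{k−1} p_j e^{−r}) ε_k. -/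

import Mathlib

/-- Sup norm over a finite nonempty state space. -/
noncomputable def supNorm {S : Type*} [Fintype S] [Nonempty S] (f : S → ℝ) : ℝ :=
  Finset.univ.sup' Finset.univ_nonempty (fun s => |f s|)

lemma supNorm_le {S : Type*} [Fintype S] [Nonempty S] {f : S → ℝ} {a : ℝ}
    (h : ∀ s, |f s| ≤ a) : supNorm f ≤ a :=
  Finset.sup'_le _ _ fun s _ => h s

lemma abs_le_supNorm {S : Type*} [Fintype S] [Nonempty S] (f : S → ℝ) (s : S) :
    |f s| ≤ supNorm f :=
  Finset.le_sup' (fun s => |f s|) (Finset.mem_univ s)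

lemma supNorm_nonneg {S : Type*} [Fintype S] [Nonempty S] (f : S → ℝ) :
    0 ≤ supNorm f :=
  le_trans (abs_nonneg _) (abs_le_supNorm f (Classical.arbitrary S))

/-- error propagation in backward value approximation: the
one-step bound `‖V̂_t − V_t‖ < ε_t + p_t e^{−r} ‖V̂_{t+1} − V_{t+1}‖` and the
inductive bound `‖V̂_t − V_t‖ < Σ_{k=t}^{T} (∏_{j=t}^{k−1} p_j e^{−r}) ε_k`. -/
theorem value_approximation_error_propagation
    {S : Type*} [Fintype S] [Nonempty S]
    (T : ℕ) (p q : ℕ → ℝ) (r : ℝ) (hr : 0 ≤ r)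
    (hp0 : ∀ t, 0 ≤ p t) (hp1 : ∀ t, p t ≤ 1)
    (hq0 : ∀ t, 0 ≤ q t) (hq1 : ∀ t, q t ≤ 1)
    (ρA ρB : ℕ → (S → ℝ) → (S → ℝ))
    (lipA : ∀ (t : ℕ) (X Y : S → ℝ), supNorm (ρA t X - ρA t Y) ≤ supNorm (X - Y))
    (lipB : ∀ (t : ℕ) (X Y : S → ℝ), supNorm (ρB t X - ρB t Y) ≤ supNorm (X - Y))
    (cA cB : ℕ → S → ℝ)
    (V Vhat : ℕ → S → ℝ) (ε : ℕ → ℝ)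
    (hV : ∀ t < T, V t = fun s =>
      q t * ρB t (cB t) s +
      p t * ρA t (fun s' => cA t s' + Real.exp (-r) * V (t + 1) s') s)
    (hT : supNorm (Vhat T - V T) < ε T)
    (hstep : ∀ t < T,
      supNorm (Vhat t - fun s =>
        q t * ρB t (cB t) s +
        p t * ρA t (fun s' => cA t s' + Real.exp (-r) * Vhat (t + 1) s') s) < ε t) :
    (∀ t < T, supNorm (Vhat t - V t) <
      ε t + p t * Real.exp (-r) * supNorm (Vhat (t + 1) - V (t + 1))) ∧
    (∀ t ≤ T, supNorm (Vhat t - V t) <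
      ∑ k ∈ Finset.Icc t T, (∏ j ∈ Finset.Ico t k, p j * Real.exp (-r)) * ε k) := by
  have hexp : (0:ℝ) < Real.exp (-r) := Real.exp_pos _
  -- one-step bound
  have key : ∀ t < T, supNorm (Vhat t - V t) <
      ε t + p t * Real.exp (-r) * supNorm (Vhat (t + 1) - V (t + 1)) := by
    intro t ht
    set X : S → ℝ := fun s' => cA t s' + Real.exp (-r) * Vhat (t + 1) s'
    set Y : S → ℝ := fun s' => cA t s' + Real.exp (-r) * V (t + 1) s'
    set W : S → ℝ := fun s => q t * ρB t (cB t) s + p t * ρA t X s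
    have hXY : supNorm (X - Y) ≤ Real.exp (-r) * supNorm (Vhat (t+1) - V (t+1)) := by
      apply supNorm_le
      intro s
      have : (X - Y) s = Real.exp (-r) * (Vhat (t+1) - V (t+1)) s := by
        simp [X, Y, Pi.sub_apply]; ring
      rw [this, abs_mul, abs_of_pos hexp]
      exact mul_le_mul_of_nonneg_left (abs_le_supNorm _ s) hexp.le
    have hρ : supNorm (ρA t X - ρA t Y) ≤ Real.exp (-r) * supNorm (Vhat (t+1) - V (t+1)) :=
      le_trans (lipA t X Y) hXY
    have hmain : supNorm (Vhat t - V t) ≤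
        supNorm (Vhat t - W) + p t * Real.exp (-r) * supNorm (Vhat (t+1) - V (t+1)) := by
      apply supNorm_le
      intro s
      have hdecomp : (Vhat t - V t) s = (Vhat t - W) s + p t * (ρA t X - ρA t Y) s := by
        rw [hV t ht]
        simp [W, Pi.sub_apply]; ring
      calc |(Vhat t - V t) s| ≤ |(Vhat t - W) s| + |p t * (ρA t X - ρA t Y) s| := by
              rw [hdecomp]; exact abs_add_le _ _
        _ ≤ supNorm (Vhat t - W) + p t * (Real.exp (-r) * supNorm (Vhat (t+1) - V (t+1))) := by
              gcongr
              · exact abs_le_supNorm _ s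
              · rw [abs_mul, abs_of_nonneg (hp0 t)]
                exact mul_le_mul_of_nonneg_left
                  (le_trans (abs_le_supNorm _ s) hρ) (hp0 t)
        _ = supNorm (Vhat t - W) + p t * Real.exp (-r) * supNorm (Vhat (t+1) - V (t+1)) := by
              ring
    have := hstep t ht
    calc supNorm (Vhat t - V t)
        ≤ supNorm (Vhat t - W) + p t * Real.exp (-r) * supNorm (Vhat (t+1) - V (t+1)) := hmain
      _ < ε t + p t * Real.exp (-r) * supNorm (Vhat (t+1) - V (t+1)) := by
          apply add_lt_add_left
          exact hstep t ht
  refine ⟨key, ?_⟩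
  -- inductive bound by downward induction
  have main : ∀ d t, t + d = T → supNorm (Vhat t - V t) <
      ∑ k ∈ Finset.Icc t T, (∏ j ∈ Finset.Ico t k, p j * Real.exp (-r)) * ε k := by
    intro d
    induction d with
    | zero =>
      intro t ht
      subst ht
      simp only [Nat.add_zero] at *
      rw [Finset.Icc_self, Finset.sum_singleton, Finset.Ico_self, Finset.prod_empty, one_mul]
      exact hT
    | succ n ih =>
      intro t ht
      have htT : t < T := by omega
      have hnext := ih (t+1) (by omega)
      have hc : 0 ≤ p t * Real.exp (-r) := mul_nonneg (hp0 t) hexp.le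
      have hsum : (∑ k ∈ Finset.Icc t T, (∏ j ∈ Finset.Ico t k, p j * Real.exp (-r)) * ε k)
          = ε t + p t * Real.exp (-r) *
            ∑ k ∈ Finset.Icc (t+1) T, (∏ j ∈ Finset.Ico (t+1) k, p j * Real.exp (-r)) * ε k := by
        rw [← Finset.sum_Ioc_add_eq_sum_Icc (le_of_lt htT)]
        have : Finset.Ioc t T = Finset.Icc (t+1) T := by
          ext x; simp only [Finset.mem_Ioc, Finset.mem_Icc]; omega
        rw [this, Finset.Ico_self, Finset.prod_empty, one_mul, add_comm]
        congr 1
        rw [Finset.mul_sum]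
        apply Finset.sum_congr rfl
        intro k hk
        simp only [Finset.mem_Icc] at hk
        rw [← mul_assoc]
        congr 1
        exact Finset.prod_eq_prod_Ico_succ_bot (by omega) _
      rw [hsum]
      calc supNorm (Vhat t - V t)
          < ε t + p t * Real.exp (-r) * supNorm (Vhat (t+1) - V (t+1)) := key t htT
        _ ≤ ε t + p t * Real.exp (-r) *
            ∑ k ∈ Finset.Icc (t+1) T, (∏ j ∈ Finset.Ico (t+1) k, p j * Real.exp (-r)) * ε k := by
            have := mul_le_mul_of_nonneg_left hnext.le hc
            linarith
  intro t ht
  exact main (T - t) t (by omega)
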